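/- In the two-seller sequential-search demand system, the bonus is strictly decreasing in the reservation value A (equivalently, strictly increasing in the search cost s): if f > 0 on (0,1) and 0 < A₁ < A₂ ≤ 1 with max(p_i, p_j) ≤ A₁ and |p_i − p_j| ≤ 1 − A₂, then B_i evaluated at reservation value A₂ is strictly smaller than B_i evaluated at reservation value A₁. -/

import Mathlib

open MeasureTheory

/-- The CDF associated to density `f` supported on `[0,1]`. -/
noncomputable def cdf (f : ℝ → ℝ) (x : ℝ) : ℝ := ∫ u in (0:ℝ)..x, f u

/-- Seller i's bonus `B_i = D_i¹ - D_i²`, viewed as a function of the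
reservation value `A` with the prices `pi, pj` fixed. -/
noncomputable def bonusI (f : ℝ → ℝ) (pi pj A : ℝ) : ℝ :=
  (1 - cdf f (A + (pi - pj)) + ∫ u in pj..A, cdf f u * f (u + (pi - pj)))
    - ((1 - cdf f A) * cdf f (A - (pi - pj))
        + ∫ u in pj..(A - (pi - pj)), cdf f u * f (u + (pi - pj)))

/-- The bonus is strictly decreasing in the reservation value `A`
(equivalently, strictly increasing in the search cost `s`). -/
theorem bonus_strict_anti_in_A
    (f : ℝ → ℝ) (hf_cont : Continuous f) (hf_nonneg : ∀ x, 0 ≤ f x)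
    (hf_supp : ∀ x, x < 0 ∨ 1 < x → f x = 0)
    (hf_total : (∫ u in (0:ℝ)..1, f u) = 1)
    (hf_pos : ∀ x, 0 < x → x < 1 → 0 < f x)
    (pi pj A₁ A₂ : ℝ) (hpi : 0 ≤ pi) (hpj : 0 ≤ pj)
    (hA₁ : 0 < A₁) (hA₁₂ : A₁ < A₂) (hA₂ : A₂ ≤ 1)
    (hmax : max pi pj ≤ A₁) (hgap : |pi - pj| ≤ 1 - A₂) :
    bonusI f pi pj A₂ < bonusI f pi pj A₁ := by
  set Δ : ℝ := pi - pj with hΔdef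
  -- derivative of the cdf
  have hF : ∀ x : ℝ, HasDerivAt (cdf f) (f x) x := by
    intro x
    exact intervalIntegral.integral_hasDerivAt_right
      (hf_cont.intervalIntegrable 0 x)
      (hf_cont.stronglyMeasurableAtFilter _ _)
      hf_cont.continuousAt
  have hFc : Continuous (cdf f) := by
    rw [continuous_iff_continuousAt]; exact fun x => (hF x).continuousAt
  have hgc : Continuous (fun u => cdf f u * f (u + Δ)) :=
    hFc.mul (hf_cont.comp (continuous_id.add continuous_const))
  -- derivative of the bonus
  have hB : ∀ A : ℝ, HasDerivAt (bonusI f pi pj)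
      (-((1 - cdf f A) * (f (A + Δ) + f (A - Δ)))) A := by
    intro A
    have h1 : HasDerivAt (fun A : ℝ => cdf f (A + Δ)) (f (A + Δ)) A := by
      have := (hF (A + Δ)).comp A ((hasDerivAt_id A).add_const Δ)
      simp at this ⊢; exact this
    have h2 : HasDerivAt (fun A : ℝ => ∫ u in pj..A, cdf f u * f (u + Δ))
        (cdf f A * f (A + Δ)) A :=
      intervalIntegral.integral_hasDerivAt_right (hgc.intervalIntegrable _ _)
        (hgc.stronglyMeasurableAtFilter _ _) hgc.continuousAt
    have h3a : HasDerivAt (fun A : ℝ => cdf f (A - Δ)) (f (A - Δ)) A := by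
      have := (hF (A - Δ)).comp A ((hasDerivAt_id A).sub_const Δ)
      simp at this ⊢; exact this
    have h3 : HasDerivAt (fun A : ℝ => (1 - cdf f A) * cdf f (A - Δ))
        ((0 - f A) * cdf f (A - Δ) + (1 - cdf f A) * f (A - Δ)) A :=
      ((hasDerivAt_const A (1:ℝ)).sub (hF A)).mul h3a
    have h4 : HasDerivAt (fun A : ℝ => ∫ u in pj..(A - Δ), cdf f u * f (u + Δ))
        (cdf f (A - Δ) * f (A - Δ + Δ)) A := by
      have := (intervalIntegral.integral_hasDerivAt_right
          (hgc.intervalIntegrable pj (A - Δ))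
          (hgc.stronglyMeasurableAtFilter _ _) hgc.continuousAt).comp A
          ((hasDerivAt_id A).sub_const Δ)
      simp at this ⊢; exact this
    have hcomb := (((hasDerivAt_const A (1:ℝ)).sub h1).add h2).sub (h3.add h4)
    have hfun : bonusI f pi pj = fun A : ℝ =>
        (1 - cdf f (A + Δ) + ∫ u in pj..A, cdf f u * f (u + Δ))
          - ((1 - cdf f A) * cdf f (A - Δ)
              + ∫ u in pj..(A - Δ), cdf f u * f (u + Δ)) := by
      funext x; rfl
    rw [hfun]
    have : A - Δ + Δ = A := by ring
    rw [this] at hcomb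
    exact hcomb.congr_deriv (by ring)
  -- strict antitonicity on [A₁, A₂]
  have key : StrictAntiOn (bonusI f pi pj) (Set.Icc A₁ A₂) := by
    apply strictAntiOn_of_deriv_neg (convex_Icc A₁ A₂)
    · exact Continuous.continuousOn (by
        rw [continuous_iff_continuousAt]; exact fun x => (hB x).continuousAt)
    · intro x hx
      rw [interior_Icc] at hx
      obtain ⟨hx1, hx2⟩ := hx
      rw [(hB x).deriv]
      have hpiA : pi ≤ A₁ := le_trans (le_max_left _ _) hmax
      have hpjA : pj ≤ A₁ := le_trans (le_max_right _ _) hmax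
      have habs1 : Δ ≤ 1 - A₂ := le_trans (le_abs_self Δ) hgap
      have habs2 : -Δ ≤ 1 - A₂ := le_trans (neg_le_abs Δ) hgap
      have hΔlo : -A₁ ≤ Δ := by simp only [hΔdef]; linarith
      have hΔhi : Δ ≤ A₁ := by simp only [hΔdef]; linarith
      have hx0 : 0 < x := lt_trans hA₁ hx1
      have hx1' : x < 1 := lt_of_lt_of_le hx2 hA₂
      -- f (x + Δ) > 0
      have hfp1 : 0 < f (x + Δ) := hf_pos _ (by linarith) (by linarith)
      have hfp2 : 0 < f (x - Δ) := hf_pos _ (by linarith) (by linarith)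
      -- 1 - cdf f x > 0
      have hsplit : cdf f x + ∫ u in x..1, f u = 1 := by
        rw [show cdf f x = ∫ u in (0:ℝ)..x, f u from rfl]
        rw [intervalIntegral.integral_add_adjacent_intervals
          (hf_cont.intervalIntegrable 0 x) (hf_cont.intervalIntegrable x 1)]
        exact hf_total
      have htail : 0 < ∫ u in x..1, f u := by
        apply intervalIntegral.intervalIntegral_pos_of_pos_on
          (hf_cont.intervalIntegrable x 1)
        · intro t ht
          exact hf_pos t (lt_trans hx0 ht.1) ht.2
        · exact hx1'
      have hcdf : 1 - cdf f x > 0 := by linarith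
      have : 0 < (1 - cdf f x) * (f (x + Δ) + f (x - Δ)) :=
        mul_pos hcdf (add_pos hfp1 hfp2)
      linarith
  exact key (Set.left_mem_Icc.mpr (le_of_lt hA₁₂))
    (Set.right_mem_Icc.mpr (le_of_lt hA₁₂)) hA₁₂
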